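/- Conditional correlation bound via the chain rule: if X₁, X₂ are real square-integrable random variables with positive variances, W₀ is any random variable, θ₁ = θ(X₁, (X₂,W₀)) and ρ* ≥ θ(X₁, X₂ | W₀), then 1 − θ(X₁,W₀)² ≤ min((1 − ρ(X₁,X₂)²)/(1 − ρ*²), 1), provided ρ* < 1. -/

import Mathlib

open MeasureTheory ProbabilityTheory

section Aux

variable {Ω : Type*} [m : MeasurableSpace Ω] {μ : Measure Ω}

lemma aux_integrable_mul {f g : Ω → ℝ} (hf : MemLp f 2 μ) (hg : MemLp g 2 μ) :
    Integrable (fun ω => f ω * g ω) μ := by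
  refine Integrable.mono' ((hf.integrable_sq.add hg.integrable_sq).div_const 2)
    (hf.aestronglyMeasurable.mul hg.aestronglyMeasurable) (ae_of_all _ fun ω => ?_)
  simp only [Pi.add_apply, Pi.div_apply]
  rw [Real.norm_eq_abs, abs_mul]
  nlinarith [sq_nonneg (|f ω| - |g ω|), sq_abs (f ω), sq_abs (g ω), abs_nonneg (f ω),
    abs_nonneg (g ω)]

end Aux

section Aux2

variable {Ω : Type*} {m' m : MeasurableSpace Ω} {μ : Measure Ω}

lemma aux_memℒp_condexp [IsProbabilityMeasure μ] (hm : m' ≤ m)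
    {X : Ω → ℝ} (hX : MemLp X 2 μ) : MemLp (μ[X|m']) 2 μ := by
  set f := hX.toLp X with hf
  have h1 : (condExpL2 ℝ ℝ hm f : Ω → ℝ) =ᵐ[μ] μ[X|m'] := by
    refine ae_eq_condExp_of_forall_setIntegral_eq hm (hX.integrable one_le_two)
      (fun s _ hμs => ?_) (fun s hs hμs => ?_) ?_
    · exact integrableOn_Lp_of_measure_ne_top _ fact_one_le_two_ennreal.elim hμs.ne
    · rw [integral_condExpL2_eq hm f hs hμs.ne]
      exact setIntegral_congr_ae (hm s hs) (hX.coeFn_toLp.mono fun x hx _ => hx)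
    · exact aestronglyMeasurable_condExpL2 hm f
  exact (Lp.memLp ((condExpL2 ℝ ℝ hm f : lpMeas ℝ ℝ m' 2 μ) : Lp ℝ 2 μ)).ae_eq h1

/-- Conditional expectation minimizes the L² distance among `m'`-measurable functions. -/
lemma aux_condexp_min [IsProbabilityMeasure μ] (hm : m' ≤ m)
    {X Y : Ω → ℝ} (hX : MemLp X 2 μ) (hY : MemLp Y 2 μ) (hYm : StronglyMeasurable[m'] Y) :
    ∫ ω, (X ω - (μ[X|m']) ω)^2 ∂μ ≤ ∫ ω, (X ω - Y ω)^2 ∂μ := by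
  haveI : SigmaFinite (μ.trim hm) := (isFiniteMeasure_trim hm).toSigmaFinite
  set E : Ω → ℝ := μ[X|m'] with hE
  have hE2 : MemLp E 2 μ := aux_memℒp_condexp hm hX
  have hEm : StronglyMeasurable[m'] E := stronglyMeasurable_condExp
  set Z : Ω → ℝ := fun ω => E ω - Y ω with hZ
  have hZ2 : MemLp Z 2 μ := hE2.sub hY
  have hZm : StronglyMeasurable[m'] Z := hEm.sub hYm
  set g : Ω → ℝ := fun ω => X ω - E ω with hg
  have hg2 : MemLp g 2 μ := hX.sub hE2
  have hgc : μ[g|m'] =ᵐ[μ] 0 := by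
    have h1 : μ[g|m'] =ᵐ[μ] μ[X|m'] - μ[E|m'] :=
      condExp_sub (hX.integrable one_le_two) (hE2.integrable one_le_two) m'
    have h2 : μ[E|m'] = E := condExp_of_stronglyMeasurable hm hEm (hE2.integrable one_le_two)
    filter_upwards [h1] with ω hω
    simp [hω, h2, ← hE]
  -- cross term vanishes
  have hZg : Integrable (Z * g) μ := aux_integrable_mul hZ2 hg2
  have hcross : ∫ ω, Z ω * g ω ∂μ = 0 := by
    have h1 : μ[Z * g|m'] =ᵐ[μ] Z * μ[g|m'] :=
      condExp_mul_of_stronglyMeasurable_left hZm hZg (hg2.integrable one_le_two)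
    have h2 : μ[Z * g|m'] =ᵐ[μ] 0 := by
      filter_upwards [h1, hgc] with ω h1ω h2ω
      simp [h1ω, h2ω]
    calc ∫ ω, Z ω * g ω ∂μ = ∫ ω, (μ[Z * g|m']) ω ∂μ := (integral_condExp hm).symm
      _ = ∫ ω, (0 : Ω → ℝ) ω ∂μ := integral_congr_ae h2
      _ = 0 := by simp
  have hint1 : Integrable (fun ω => g ω ^ 2) μ := hg2.integrable_sq
  have hint2 : Integrable (fun ω => Z ω * g ω) μ := hZg
  have hint3 : Integrable (fun ω => Z ω ^ 2) μ := hZ2.integrable_sq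
  have hexp : ∀ ω, (X ω - Y ω)^2 = g ω ^ 2 + 2 * (Z ω * g ω) + Z ω ^ 2 := by
    intro ω; simp only [hg, hZ]; ring
  have hint12 : Integrable (fun ω => g ω ^ 2 + 2 * (Z ω * g ω)) μ :=
    hint1.add (hint2.const_mul 2)
  have hsplit : ∫ ω, (X ω - Y ω)^2 ∂μ
      = ∫ ω, g ω ^ 2 ∂μ + 2 * ∫ ω, Z ω * g ω ∂μ + ∫ ω, Z ω ^ 2 ∂μ := by
    rw [integral_congr_ae (ae_of_all _ hexp), integral_add hint12 hint3,
      integral_add hint1 (hint2.const_mul 2), integral_const_mul]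
  have hZsq : 0 ≤ ∫ ω, Z ω ^ 2 ∂μ := integral_nonneg fun ω => sq_nonneg _
  have : ∫ ω, (X ω - E ω)^2 ∂μ = ∫ ω, g ω ^ 2 ∂μ := rfl
  rw [this, hsplit, hcross]
  linarith

end Aux2

section Aux3
variable {Ω : Type*} [m : MeasurableSpace Ω] {μ : Measure Ω}

lemma aux_variance_eq [IsProbabilityMeasure μ] {X : Ω → ℝ} (hX : MemLp X 2 μ) :
    variance X μ = ∫ ω, (X ω - ∫ x, X x ∂μ)^2 ∂μ := by
  rw [variance_eq_integral hX.aestronglyMeasurable.aemeasurable]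

end Aux3
noncomputable def cov {Ω : Type*} [MeasurableSpace Ω] (μ : Measure Ω) (X Y : Ω → ℝ) : ℝ :=
  ∫ ω, (X ω - ∫ x, X x ∂μ) * (Y ω - ∫ x, Y x ∂μ) ∂μ

noncomputable def corr {Ω : Type*} [MeasurableSpace Ω] (μ : Measure Ω) (X Y : Ω → ℝ) : ℝ :=
  cov μ X Y / (Real.sqrt (variance X μ) * Real.sqrt (variance Y μ))

/-- Expected conditional variance `E[var(X | Z)] = E[(X - E[X|Z])²]`. -/
noncomputable def expCondVar {Ω β : Type*} [m : MeasurableSpace Ω] [mβ : MeasurableSpace β]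
    (μ : Measure Ω) (X : Ω → ℝ) (Z : Ω → β) : ℝ :=
  ∫ ω, (X ω - (μ[X | MeasurableSpace.comap Z mβ]) ω)^2 ∂μ

/-- Squared correlation ratio `θ(X, Z)² = 1 - E[var(X|Z)] / var(X)`. -/
noncomputable def corrRatioSq {Ω β : Type*} [m : MeasurableSpace Ω] [mβ : MeasurableSpace β]
    (μ : Measure Ω) (X : Ω → ℝ) (Z : Ω → β) : ℝ :=
  1 - expCondVar μ X Z / variance X μ

/-- Squared conditional correlation ratio
`θ(X₁, X₂ | W₀)² = 1 - E[var(X₁|X₂,W₀)] / E[var(X₁|W₀)]`. -/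
noncomputable def condCorrRatioSq {Ω β : Type*} [m : MeasurableSpace Ω]
    [mβ : MeasurableSpace β] (μ : Measure Ω) (X₁ X₂ : Ω → ℝ) (W₀ : Ω → β) : ℝ :=
  1 - expCondVar μ X₁ (fun ω => (X₂ ω, W₀ ω)) / expCondVar μ X₁ W₀

theorem conditional_correlation_bound {Ω β : Type*} [m : MeasurableSpace Ω]
    [mβ : MeasurableSpace β] (μ : Measure Ω) [IsProbabilityMeasure μ]
    (X₁ X₂ : Ω → ℝ) (W₀ : Ω → β) (ρs : ℝ)
    (hX₁ : MemLp X₁ 2 μ) (hX₂ : MemLp X₂ 2 μ)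
    (hX₁m : Measurable X₁) (hX₂m : Measurable X₂) (hW₀ : Measurable W₀)
    (hv₁ : 0 < variance X₁ μ) (hv₂ : 0 < variance X₂ μ)
    (hcv : 0 < expCondVar μ X₁ W₀)
    (hρs : Real.sqrt (condCorrRatioSq μ X₁ X₂ W₀) ≤ ρs) (hρs0 : 0 ≤ ρs) (hρs1 : ρs < 1) :
    1 - corrRatioSq μ X₁ W₀ ≤
      min ((1 - (corr μ X₁ X₂)^2) / (1 - ρs^2)) 1 := by
  have hm₁ : MeasurableSpace.comap W₀ mβ ≤ m := hW₀.comap_le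
  set Z : Ω → ℝ × β := fun ω => (X₂ ω, W₀ ω) with hZdef
  have hZm : Measurable Z := hX₂m.prodMk hW₀
  have hm₂ : MeasurableSpace.comap Z inferInstance ≤ m := hZm.comap_le
  set v₁ := variance X₁ μ with hv₁def
  set v₂ := variance X₂ μ with hv₂def
  set c := cov μ X₁ X₂ with hcdef
  set m1 := ∫ x, X₁ x ∂μ with hm1def
  set m2 := ∫ x, X₂ x ∂μ with hm2def
  set b := c / v₂ with hbdef
  -- (A) : expCondVar ≤ variance
  have hA : expCondVar μ X₁ W₀ ≤ v₁ := by
    rw [hv₁def, aux_variance_eq hX₁]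
    exact aux_condexp_min hm₁ hX₁ (memLp_const m1) stronglyMeasurable_const
  -- (B) : projection onto σ(X₂, W₀) beats the linear regression
  have hX₂c : Measurable[MeasurableSpace.comap Z inferInstance] X₂ :=
    measurable_fst.comp (Measurable.of_comap_le le_rfl)
  have hYm : StronglyMeasurable[MeasurableSpace.comap Z inferInstance]
      (fun ω => m1 + b * (X₂ ω - m2)) :=
    (((hX₂c.sub measurable_const).const_mul b).const_add m1).stronglyMeasurable
  have hYmem : MemLp (fun ω => m1 + b * (X₂ ω - m2)) 2 μ :=
    (memLp_const m1).add ((hX₂.sub (memLp_const m2)).const_mul b)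
  have hB : expCondVar μ X₁ Z ≤ ∫ ω, (X₁ ω - (m1 + b * (X₂ ω - m2)))^2 ∂μ :=
    aux_condexp_min hm₂ hX₁ hYmem hYm
  -- (C) : compute the linear regression error
  have hf2 : MemLp (fun ω => X₁ ω - m1) 2 μ := hX₁.sub (memLp_const m1)
  have hg2 : MemLp (fun ω => X₂ ω - m2) 2 μ := hX₂.sub (memLp_const m2)
  have hc : c = ∫ ω, (X₁ ω - m1) * (X₂ ω - m2) ∂μ := rfl
  have hI : ∫ ω, (X₁ ω - (m1 + b * (X₂ ω - m2)))^2 ∂μ = v₁ - 2*b*c + b^2*v₂ := by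
    have e1 : (fun ω => (X₁ ω - (m1 + b * (X₂ ω - m2)))^2)
        = fun ω => (X₁ ω - m1)^2 - 2*b*((X₁ ω - m1) * (X₂ ω - m2)) + b^2*(X₂ ω - m2)^2 := by
      funext ω; ring
    have hia : Integrable (fun ω => (X₁ ω - m1)^2 - 2*b*((X₁ ω - m1) * (X₂ ω - m2))) μ :=
      hf2.integrable_sq.sub ((aux_integrable_mul hf2 hg2).const_mul (2*b))
    have hib : Integrable (fun ω => b^2*(X₂ ω - m2)^2) μ := hg2.integrable_sq.const_mul (b^2)
    have hic : Integrable (fun ω => 2*b*((X₁ ω - m1) * (X₂ ω - m2))) μ :=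
      (aux_integrable_mul hf2 hg2).const_mul (2*b)
    rw [e1, integral_add hia hib, integral_sub hf2.integrable_sq hic,
      integral_const_mul, integral_const_mul, ← hc, hv₁def, hv₂def,
      aux_variance_eq hX₁, aux_variance_eq hX₂, ← hm1def, ← hm2def]
  have hI' : v₁ - 2*b*c + b^2*v₂ = v₁ - c^2/v₂ := by
    rw [hbdef]; field_simp; ring
  have hcorr : (corr μ X₁ X₂)^2 = c^2/(v₁*v₂) := by
    rw [corr, div_pow, mul_pow, Real.sq_sqrt hv₁.le, Real.sq_sqrt hv₂.le]
  -- chain rule (definitional)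
  have hcc : expCondVar μ X₁ Z = expCondVar μ X₁ W₀ * (1 - condCorrRatioSq μ X₁ X₂ W₀) := by
    rw [condCorrRatioSq, ← hZdef]
    field_simp
    ring
  have hcle : condCorrRatioSq μ X₁ X₂ W₀ ≤ ρs^2 := by
    rcases le_or_gt 0 (condCorrRatioSq μ X₁ X₂ W₀) with h | h
    · calc condCorrRatioSq μ X₁ X₂ W₀ = Real.sqrt (condCorrRatioSq μ X₁ X₂ W₀) ^ 2 :=
          (Real.sq_sqrt h).symm
        _ ≤ ρs^2 := pow_le_pow_left₀ (Real.sqrt_nonneg _) hρs 2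
    · nlinarith
  have hkey : expCondVar μ X₁ W₀ * (1 - ρs^2) ≤ v₁ * (1 - (corr μ X₁ X₂)^2) := by
    have h1 : expCondVar μ X₁ W₀ * (1 - ρs^2) ≤ expCondVar μ X₁ Z := by
      rw [hcc]
      exact mul_le_mul_of_nonneg_left (by linarith) hcv.le
    have h2 : expCondVar μ X₁ Z ≤ v₁ - c^2/v₂ := hB.trans_eq (hI.trans hI')
    have h3 : v₁ * (1 - (corr μ X₁ X₂)^2) = v₁ - c^2/v₂ := by
      rw [hcorr]; field_simp
    linarith
  have hlhs : 1 - corrRatioSq μ X₁ W₀ = expCondVar μ X₁ W₀ / v₁ := by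
    rw [corrRatioSq]; ring
  have hρs2 : (0:ℝ) < 1 - ρs^2 := by nlinarith
  rw [hlhs, le_min_iff]
  constructor
  · rw [div_le_div_iff₀ hv₁ hρs2]
    linarith
  · exact div_le_one_of_le₀ hA hv₁.le
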